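/- Let y : [a,b] → ℝⁿ solve y'(t) = A(t)y(t) with A continuous, let W be an invertible n×n real matrix, and suppose that for some χ > 0 the matrix WᵀWA(t) + A(t)ᵀWᵀW + 2χ·WᵀW is negative semi-definite for all t ∈ [a,b]. Then with the norm |y|_W := ‖W y‖₂, for all a ≤ t₁ ≤ t₂ ≤ b we have |y(t₂)|_W ≤ |y(t₁)|_W · exp(−χ(t₂ − t₁)). -/

import Mathlib

open Matrix Set

/-- Weighted-norm exponential decay: if `WᵀWA(t) + A(t)ᵀWᵀW + 2χ WᵀW` is negative
semi-definite on `[a,b]`, then `|y|_W := ‖Wy‖₂` decays exponentially along solutions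
of `y' = A(t)y`. -/
theorem stmt_4 {n : ℕ} (a b χ : ℝ) (hχ : 0 < χ)
    (A : ℝ → Matrix (Fin n) (Fin n) ℝ) (hA : ContinuousOn A (Icc a b))
    (W : Matrix (Fin n) (Fin n) ℝ) (hW : IsUnit W)
    (y : ℝ → Fin n → ℝ)
    (hy : ∀ t ∈ Icc a b, HasDerivAt y ((A t).mulVec (y t)) t)
    (hneg : ∀ t ∈ Icc a b, ∀ v : Fin n → ℝ,
      v ⬝ᵥ ((Wᵀ * W * A t + (A t)ᵀ * Wᵀ * W + (2 * χ) • (Wᵀ * W)).mulVec v) ≤ 0) :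
    ∀ t₁ ∈ Icc a b, ∀ t₂ ∈ Icc a b, t₁ ≤ t₂ →
      Real.sqrt (W.mulVec (y t₂) ⬝ᵥ W.mulVec (y t₂)) ≤
        Real.sqrt (W.mulVec (y t₁) ⬝ᵥ W.mulVec (y t₁)) * Real.exp (-χ * (t₂ - t₁)) := by
  intro t₁ ht₁ t₂ ht₂ h12
  -- the squared weighted norm
  set g : ℝ → ℝ := fun t => W.mulVec (y t) ⬝ᵥ W.mulVec (y t) with hg_def
  have hg_nonneg : ∀ t, 0 ≤ g t := fun t => Finset.sum_nonneg fun i _ => mul_self_nonneg _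
  -- derivative of g
  have hz : ∀ t ∈ Icc a b, HasDerivAt (fun s => W.mulVec (y s))
      (W.mulVec ((A t).mulVec (y t))) t := by
    intro t ht
    have := (Matrix.mulVecLin W).toContinuousLinearMap.hasFDerivAt.comp_hasDerivAt t (hy t ht)
    simpa [Function.comp_def] using this
  have hg' : ∀ t ∈ Icc a b, HasDerivAt g
      (W.mulVec ((A t).mulVec (y t)) ⬝ᵥ W.mulVec (y t)
        + W.mulVec (y t) ⬝ᵥ W.mulVec ((A t).mulVec (y t))) t := by
    intro t ht
    have hzi : ∀ i, HasDerivAt (fun s => W.mulVec (y s) i)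
        (W.mulVec ((A t).mulVec (y t)) i) t := by
      intro i
      exact (hasDerivAt_pi.mp (hz t ht)) i
    have : HasDerivAt (fun s => ∑ i, W.mulVec (y s) i * W.mulVec (y s) i)
        (∑ i, (W.mulVec ((A t).mulVec (y t)) i * W.mulVec (y t) i
          + W.mulVec (y t) i * W.mulVec ((A t).mulVec (y t)) i)) t := by
      exact HasDerivAt.fun_sum fun i _ => (hzi i).mul (hzi i)
    simpa [hg_def, dotProduct, Finset.sum_add_distrib] using this
  -- the derivative bound
  have hbound : ∀ t ∈ Icc a b,
      W.mulVec ((A t).mulVec (y t)) ⬝ᵥ W.mulVec (y t)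
        + W.mulVec (y t) ⬝ᵥ W.mulVec ((A t).mulVec (y t)) ≤ -(2 * χ) * g t := by
    intro t ht
    have h := hneg t ht (y t)
    have e1 : y t ⬝ᵥ ((Wᵀ * W * A t).mulVec (y t))
        = W.mulVec (y t) ⬝ᵥ W.mulVec ((A t).mulVec (y t)) := by
      rw [← Matrix.mulVec_mulVec, ← Matrix.mulVec_mulVec, Matrix.dotProduct_mulVec,
        Matrix.vecMul_transpose]
    have e2 : y t ⬝ᵥ (((A t)ᵀ * Wᵀ * W).mulVec (y t))
        = W.mulVec ((A t).mulVec (y t)) ⬝ᵥ W.mulVec (y t) := by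
      rw [← Matrix.mulVec_mulVec, ← Matrix.mulVec_mulVec, Matrix.dotProduct_mulVec,
        Matrix.vecMul_transpose, Matrix.dotProduct_mulVec, Matrix.vecMul_transpose]
    have e3 : y t ⬝ᵥ ((Wᵀ * W).mulVec (y t)) = g t := by
      rw [← Matrix.mulVec_mulVec, Matrix.dotProduct_mulVec, Matrix.vecMul_transpose]
    rw [Matrix.add_mulVec, Matrix.add_mulVec, Matrix.smul_mulVec,
      dotProduct_add, dotProduct_add, dotProduct_smul,
      e1, e2, e3] at h
    simp only [smul_eq_mul] at h
    linarith [h]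
  -- F = g * exp(2χ t) is antitone on [t₁, t₂]
  set F : ℝ → ℝ := fun t => g t * Real.exp (2 * χ * t) with hF_def
  have hsub : Icc t₁ t₂ ⊆ Icc a b := Icc_subset_Icc ht₁.1 ht₂.2
  have hF' : ∀ t ∈ Icc a b, HasDerivAt F
      ((W.mulVec ((A t).mulVec (y t)) ⬝ᵥ W.mulVec (y t)
        + W.mulVec (y t) ⬝ᵥ W.mulVec ((A t).mulVec (y t))) * Real.exp (2 * χ * t)
        + g t * (Real.exp (2 * χ * t) * (2 * χ))) t := by
    intro t ht
    have hexp : HasDerivAt (fun s => Real.exp (2 * χ * s)) (Real.exp (2 * χ * t) * (2 * χ)) t := by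
      simpa [Function.comp_def] using (Real.hasDerivAt_exp (2 * χ * t)).comp t
        ((hasDerivAt_id t).const_mul (2 * χ))
    exact (hg' t ht).mul hexp
  have hanti : AntitoneOn F (Icc t₁ t₂) := by
    apply antitoneOn_of_deriv_nonpos (convex_Icc t₁ t₂)
    · exact fun t ht => ((hF' t (hsub ht)).continuousAt).continuousWithinAt
    · intro t ht
      rw [interior_Icc] at ht
      exact (hF' t (hsub (Ioo_subset_Icc_self ht))).differentiableAt.differentiableWithinAt
    · intro t ht
      rw [interior_Icc] at ht
      have htab := hsub (Ioo_subset_Icc_self ht)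
      rw [(hF' t htab).deriv]
      have hb := hbound t htab
      have hexp_pos : (0:ℝ) < Real.exp (2 * χ * t) := Real.exp_pos _
      nlinarith [hg_nonneg t]
  have hFle : F t₂ ≤ F t₁ :=
    hanti (left_mem_Icc.mpr h12) (right_mem_Icc.mpr h12) h12
  -- unwind
  have hgle : g t₂ ≤ g t₁ * Real.exp (-(2*χ) * (t₂ - t₁)) := by
    have hexp_pos : (0:ℝ) < Real.exp (2 * χ * t₂) := Real.exp_pos _
    have : g t₂ * Real.exp (2 * χ * t₂) ≤ g t₁ * Real.exp (2 * χ * t₁) := hFle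
    have heq : Real.exp (2 * χ * t₁) = Real.exp (-(2*χ) * (t₂ - t₁)) * Real.exp (2 * χ * t₂) := by
      rw [← Real.exp_add]; ring_nf
    rw [heq, ← mul_assoc] at this
    exact le_of_mul_le_mul_right this hexp_pos
  calc Real.sqrt (g t₂) ≤ Real.sqrt (g t₁ * Real.exp (-(2*χ) * (t₂ - t₁))) :=
        Real.sqrt_le_sqrt hgle
    _ = Real.sqrt (g t₁) * Real.exp (-χ * (t₂ - t₁)) := by
        rw [Real.sqrt_mul (hg_nonneg t₁)]
        congr 1
        rw [show (-(2*χ)*(t₂-t₁)) = (-χ*(t₂-t₁)) + (-χ*(t₂-t₁)) by ring, Real.exp_add,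
          Real.sqrt_mul_self (Real.exp_pos _).le]
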